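/- For every ν < 0 and every real x, the Turán-type strict inequality D_{ν−1}(x)² > D_ν(x) · D_{ν−2}(x) holds. -/

import Mathlib

open MeasureTheory Real Filter

noncomputable def G (ν x : ℝ) : ℝ :=
  ∫ t in Set.Ioi (0:ℝ), t ^ (-ν - 1) * Real.exp (-t^2/2 - x*t)

noncomputable def D (ν x : ℝ) : ℝ :=
  Real.exp (-x^2/4) / Real.Gamma (-ν) * G ν x

noncomputable def fI (b x : ℝ) : ℝ :=
  ∫ t in Set.Ioi (0:ℝ), t ^ b * Real.exp (-t^2/2 - x*t)

lemma key_int (b x : ℝ) (hb : -1 < b) :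
    IntegrableOn (fun t : ℝ => t ^ b * Real.exp (-t^2/2 - x*t)) (Set.Ioi 0) := by
  have hG : IntegrableOn (fun t : ℝ => Real.exp (-t) * t ^ (b+1-1)) (Set.Ioi 0) :=
    Real.GammaIntegral_convergent (by linarith)
  have : IntegrableOn (fun t : ℝ => Real.exp ((1-x)^2/2) * (Real.exp (-t) * t ^ b)) (Set.Ioi 0) := by
    have h := hG.const_mul (Real.exp ((1-x)^2/2))
    simp only [add_sub_cancel_right] at h
    exact h
  refine Integrable.mono' this ?_ ?_
  · apply Measurable.aestronglyMeasurable
    fun_prop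
  · filter_upwards [ae_restrict_mem measurableSet_Ioi] with t ht
    have ht0 : (0:ℝ) < t := ht
    have h1 : (0:ℝ) ≤ t ^ b := Real.rpow_nonneg ht0.le b
    rw [Real.norm_eq_abs, abs_of_nonneg (by positivity)]
    have h2 : Real.exp (-t^2/2 - x*t) ≤ Real.exp ((1-x)^2/2) * Real.exp (-t) := by
      rw [← Real.exp_add]
      apply Real.exp_le_exp.2
      nlinarith [sq_nonneg (t + (x-1))]
    calc t ^ b * Real.exp (-t^2/2 - x*t) ≤ t ^ b * (Real.exp ((1-x)^2/2) * Real.exp (-t)) := by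
          exact mul_le_mul_of_nonneg_left h2 h1
      _ = Real.exp ((1-x)^2/2) * (Real.exp (-t) * t ^ b) := by ring

lemma quad_pos (b x lam : ℝ)
    (hint : IntegrableOn (fun t : ℝ => t ^ b * (t - lam)^2 * Real.exp (-t^2/2 - x*t)) (Set.Ioi 0)) :
    0 < ∫ t in Set.Ioi (0:ℝ), t ^ b * (t - lam)^2 * Real.exp (-t^2/2 - x*t) := by
  rw [setIntegral_pos_iff_support_of_nonneg_ae ?_ hint]
  · have hsub : Set.Ioi (max 0 lam) ⊆ Function.support (fun t : ℝ => t ^ b * (t - lam)^2 * Real.exp (-t^2/2 - x*t)) ∩ Set.Ioi 0 := by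
      intro t ht
      have h0 : (0:ℝ) < t := lt_of_le_of_lt (le_max_left _ _) ht
      have hl : lam < t := lt_of_le_of_lt (le_max_right _ _) ht
      refine ⟨?_, h0⟩
      have : (0:ℝ) < t ^ b * (t - lam)^2 * Real.exp (-t^2/2 - x*t) := by
        have h1 := Real.rpow_pos_of_pos h0 b
        have h2 := pow_pos (sub_pos.mpr hl) 2
        exact mul_pos (mul_pos h1 h2) (Real.exp_pos _)
      exact Function.mem_support.2 (ne_of_gt this)
    calc (0:ENNReal) < volume (Set.Ioi (max 0 lam)) := by simp
      _ ≤ _ := measure_mono hsub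
  · filter_upwards [ae_restrict_mem measurableSet_Ioi] with t ht
    have h0 : (0:ℝ) < t := ht
    have := Real.rpow_nonneg h0.le b
    positivity

lemma fI_pos (b x : ℝ) (hb : -1 < b) : 0 < fI b x := by
  rw [fI, setIntegral_pos_iff_support_of_nonneg_ae ?_ (key_int b x hb)]
  · have hsub : Set.Ioi (0:ℝ) ⊆ Function.support (fun t : ℝ => t ^ b * Real.exp (-t^2/2 - x*t)) ∩ Set.Ioi 0 := by
      intro t ht
      have h0 : (0:ℝ) < t := ht
      refine ⟨Function.mem_support.2 (ne_of_gt ?_), ht⟩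
      exact mul_pos (Real.rpow_pos_of_pos h0 b) (Real.exp_pos _)
    calc (0:ENNReal) < volume (Set.Ioi (0:ℝ)) := by simp
      _ ≤ _ := measure_mono hsub
  · filter_upwards [ae_restrict_mem measurableSet_Ioi] with t ht
    have h0 : (0:ℝ) < t := ht
    have := Real.rpow_nonneg h0.le b
    positivity

lemma parts (a x : ℝ) (ha : 0 < a) :
    fI (a+1) x + x * fI a x = a * fI (a-1) x := by
  set E : ℝ → ℝ := fun t => Real.exp (-t^2/2 - x*t) with hE
  set F : ℝ → ℝ := fun t => t ^ a * E t with hF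
  have hderiv : ∀ t ∈ Set.Ioi (0:ℝ), HasDerivAt F
      (a * (t ^ (a-1) * E t) - (t ^ (a+1) * E t) - x * (t ^ a * E t)) t := by
    intro t ht
    have ht0 : (0:ℝ) < t := ht
    have h1 : HasDerivAt (fun s : ℝ => s ^ a) (a * t ^ (a-1)) t :=
      Real.hasDerivAt_rpow_const (Or.inl (ne_of_gt ht0))
    have h2 : HasDerivAt (fun s : ℝ => -s^2/2 - x*s) (-t - x) t := by
      have : HasDerivAt (fun s : ℝ => -s^2/2 - x*s) (-(2*t^1)/2 - x*1) t := by
        apply HasDerivAt.sub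
        · exact ((hasDerivAt_pow 2 t).neg).div_const 2
        · simpa using (hasDerivAt_id t).const_mul x
      convert this using 1
      ring
    have h3 : HasDerivAt E ((-t - x) * E t) t := by
      simpa [hE, mul_comm] using h2.exp
    have := h1.mul h3
    refine HasDerivAt.congr_deriv this ?_
    rw [Real.rpow_add ht0 a 1, Real.rpow_one]
    ring
  have hF0 : F 0 = 0 := by
    simp [hF, Real.zero_rpow (ne_of_gt ha)]
  have hcont : ContinuousWithinAt F (Set.Ici 0) 0 := by
    apply ContinuousAt.continuousWithinAt
    apply ContinuousAt.mul
    · exact Real.continuousAt_rpow_const 0 a (Or.inr ha.le)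
    · fun_prop
  have htop : Tendsto F atTop (nhds 0) := by
    have hbnd := tendsto_rpow_mul_exp_neg_mul_atTop_nhds_zero a 1 one_pos
    have h2 : Tendsto (fun t : ℝ => Real.exp ((1-x)^2/2) * (t ^ a * Real.exp (-1*t))) atTop (nhds 0) := by
      simpa using hbnd.const_mul (Real.exp ((1-x)^2/2))
    apply squeeze_zero' (g := fun t => Real.exp ((1-x)^2/2) * (t ^ a * Real.exp (-1*t)))
    · filter_upwards [eventually_gt_atTop 0] with t ht
      have := Real.rpow_nonneg ht.le a
      positivity
    · filter_upwards [eventually_gt_atTop 0] with t ht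
      have h1 : (0:ℝ) ≤ t ^ a := Real.rpow_nonneg ht.le a
      have h2 : Real.exp (-t^2/2 - x*t) ≤ Real.exp ((1-x)^2/2) * Real.exp (-1*t) := by
        rw [← Real.exp_add]
        apply Real.exp_le_exp.2
        nlinarith [sq_nonneg (t + (x-1))]
      calc F t ≤ t ^ a * (Real.exp ((1-x)^2/2) * Real.exp (-1*t)) :=
            mul_le_mul_of_nonneg_left h2 h1
        _ = Real.exp ((1-x)^2/2) * (t ^ a * Real.exp (-1*t)) := by ring
    · exact h2
  have hint : IntegrableOn (fun t : ℝ =>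
      a * (t ^ (a-1) * E t) - (t ^ (a+1) * E t) - x * (t ^ a * E t)) (Set.Ioi 0) := by
    apply Integrable.sub
    apply Integrable.sub
    · exact (key_int (a-1) x (by linarith)).const_mul a
    · exact key_int (a+1) x (by linarith)
    · exact (key_int a x (by linarith)).const_mul x
  have heq := integral_Ioi_of_hasDerivAt_of_tendsto hcont hderiv hint htop
  rw [hF0, sub_zero] at heq
  have hsplit : ∫ t in Set.Ioi (0:ℝ),
      (a * (t ^ (a-1) * E t) - (t ^ (a+1) * E t) - x * (t ^ a * E t))
      = a * fI (a-1) x - fI (a+1) x - x * fI a x := by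
    rw [integral_sub (by
        exact ((key_int (a-1) x (by linarith)).const_mul a).sub (key_int (a+1) x (by linarith)))
      ((key_int a x (by linarith)).const_mul x),
      integral_sub ((key_int (a-1) x (by linarith)).const_mul a) (key_int (a+1) x (by linarith)),
      integral_const_mul, integral_const_mul]
    rfl
  rw [hsplit] at heq
  linarith

lemma cs_strict (b x : ℝ) (hb : -1 < b) : fI (b+1) x ^ 2 < fI b x * fI (b+2) x := by
  have hb0 := fI_pos b x hb
  set lam := fI (b+1) x / fI b x with hlam
  have hcongr : ∀ t ∈ Set.Ioi (0:ℝ),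
      t ^ b * (t - lam)^2 * Real.exp (-t^2/2 - x*t)
      = t ^ (b+2) * Real.exp (-t^2/2 - x*t)
        - 2*lam * (t ^ (b+1) * Real.exp (-t^2/2 - x*t))
        + lam^2 * (t ^ b * Real.exp (-t^2/2 - x*t)) := by
    intro t ht
    have h0 : (0:ℝ) < t := ht
    rw [Real.rpow_add h0 b 2, Real.rpow_add h0 b 1, Real.rpow_one, Real.rpow_two]
    ring
  have i2 := key_int (b+2) x (by linarith)
  have i1 := key_int (b+1) x (by linarith)
  have i0 := key_int b x hb
  have hint2 : IntegrableOn (fun t : ℝ =>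
      t ^ (b+2) * Real.exp (-t^2/2 - x*t)
        - 2*lam * (t ^ (b+1) * Real.exp (-t^2/2 - x*t))
        + lam^2 * (t ^ b * Real.exp (-t^2/2 - x*t))) (Set.Ioi 0) :=
    (i2.sub (i1.const_mul (2*lam))).add (i0.const_mul (lam^2))
  have hint : IntegrableOn (fun t : ℝ => t ^ b * (t - lam)^2 * Real.exp (-t^2/2 - x*t)) (Set.Ioi 0) := by
    apply hint2.congr_fun (fun t ht => (hcongr t ht).symm) measurableSet_Ioi
  have hpos := quad_pos b x lam hint
  rw [setIntegral_congr_fun measurableSet_Ioi (fun t ht => hcongr t ht)] at hpos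
  rw [integral_add (by exact i2.sub (i1.const_mul (2*lam))) (by exact i0.const_mul (lam^2)),
      integral_sub (by exact i2) (by exact i1.const_mul (2*lam)),
      integral_const_mul, integral_const_mul] at hpos
  have hexp : fI (b+2) x - 2*lam * fI (b+1) x + lam^2 * fI b x
      = fI (b+2) x - fI (b+1) x ^2 / fI b x := by
    rw [hlam]
    field_simp [hlam]
    ring
  rw [show (∫ t in Set.Ioi (0:ℝ), t ^ (b+2) * Real.exp (-t^2/2 - x*t)) = fI (b+2) x from rfl,
      show (∫ t in Set.Ioi (0:ℝ), t ^ (b+1) * Real.exp (-t^2/2 - x*t)) = fI (b+1) x from rfl,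
      show (∫ t in Set.Ioi (0:ℝ), t ^ b * Real.exp (-t^2/2 - x*t)) = fI b x from rfl] at hpos
  rw [hexp] at hpos
  have := (div_lt_iff₀ hb0).1 (by linarith : fI (b+1) x ^2 / fI b x < fI (b+2) x)
  linarith [this]

theorem stmt6 (ν : ℝ) (hν : ν < 0) (x : ℝ) :
    D ν x * D (ν - 2) x < (D (ν - 1) x) ^ 2 := by
  have ha : 0 < -ν := by linarith
  -- identify G with fI
  have e0 : G ν x = fI (-ν - 1) x := rfl
  have e1 : G (ν - 1) x = fI (-(ν-1) - 1) x := rfl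
  have e2 : G (ν - 2) x = fI (-(ν-2) - 1) x := rfl
  rw [show -(ν-1) - 1 = -ν from by ring] at e1
  rw [show -(ν-2) - 1 = -ν + 1 from by ring] at e2
  set A := fI (-ν - 1) x with hA
  set B := fI (-ν) x with hB
  set C := fI (-ν + 1) x with hC
  have hApos : 0 < A := fI_pos _ _ (by linarith)
  have hBpos : 0 < B := fI_pos _ _ (by linarith)
  have hCpos : 0 < C := fI_pos _ _ (by linarith)
  have p1 := parts (-ν) x ha
  have p2 := parts (-ν + 1) x (by linarith)
  rw [show -ν + 1 + 1 = -ν + 2 from by ring, show -ν + 1 - 1 = -ν from by ring] at p2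
  have hcs := cs_strict (-ν) x (by linarith)
  rw [show -ν + 2 = -ν + 2 from rfl] at hcs
  -- key inequality : (-ν) * (A * C) < (-ν + 1) * B ^ 2
  have hkey : (-ν) * (A * C) < (-ν + 1) * B ^ 2 := by
    nlinarith [hcs, p1, p2, hBpos, hCpos]
  -- Gamma identities
  have hg0 : 0 < Real.Gamma (-ν) := Real.Gamma_pos_of_pos ha
  have hg1 : Real.Gamma (-(ν-1)) = (-ν) * Real.Gamma (-ν) := by
    rw [show -(ν-1) = -ν + 1 from by ring, Real.Gamma_add_one (ne_of_gt ha)]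
  have hg2 : Real.Gamma (-(ν-2)) = (-ν + 1) * Real.Gamma (-(ν-1)) := by
    rw [show -(ν-2) = -(ν-1) + 1 from by ring, Real.Gamma_add_one (by intro h; apply absurd hg1; rw [show -(ν-1) = 0 from h]; simp [Real.Gamma_zero]; nlinarith [hg0] : -(ν-1) ≠ 0)]
    congr 1
    ring
  simp only [D, e0, e1, e2, hg1, hg2]
  set E := Real.exp (-x^2/4) with hEe
  have hEpos : 0 < E := Real.exp_pos _
  set g := Real.Gamma (-ν) with hg
  have hne : ν ≠ 0 := by linarith
  have hgne : g ≠ 0 := ne_of_gt hg0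
  have h1ne : (-ν + 1) ≠ 0 := by linarith
  have hc : (E/g) * (E/((-ν+1)*((-ν)*g))) = (E/((-ν)*g))^2 * ((-ν)/(-ν+1)) := by
    field_simp
  have hBC : (-ν)/(-ν+1) * (A*C) < B^2 := by
    rw [div_mul_eq_mul_div, div_lt_iff₀ (by linarith : (0:ℝ) < -ν + 1)]
    linarith [hkey]
  calc E/g*A * (E/((-ν+1)*((-ν)*g))*C)
      = (E/g) * (E/((-ν+1)*((-ν)*g))) * (A*C) := by ring
    _ = (E/((-ν)*g))^2 * ((-ν)/(-ν+1) * (A*C)) := by rw [hc]; ring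
    _ < (E/((-ν)*g))^2 * B^2 := by
        apply mul_lt_mul_of_pos_left hBC
        positivity
    _ = (E/((-ν)*g)*B)^2 := by ring
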